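/- Let A ∈ ℝ^{m×m}, B ∈ ℝ^{n×n} be positive definite, Y ∈ ℝ^{m×n} and p ≥ 2 an integer. Then the unique solution X of A^{p-1} X + A^{p-2} X B + ⋯ + X B^{p-1} = Y is given by X = (sin(π/p)/π) ∫_0^∞ (t I_m + A^p)^{-1} Y (t I_n + B^p)^{-1} t^{1/p} dt. -/

import Mathlib

open Matrix MeasureTheory

open Set Real

section auxiliary_lemmas
private lemma exp_int {r : ℝ} (hr : 0 < r) : ∫ x in Ioi (0:ℝ), Real.exp (-(r*x)) = 1/r := by
  have := Real.integral_rpow_mul_exp_neg_mul_Ioi (a := 1) one_pos hr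
  simpa using this

private lemma exp_intble {r : ℝ} (hr : 0 < r) : IntegrableOn (fun x => Real.exp (-(r*x))) (Ioi (0:ℝ)) :=
  (exp_neg_integrableOn_Ioi 0 hr).congr_fun (by intro x hx; simp [neg_mul]) measurableSet_Ioi

private lemma rpow_exp_intble {a r : ℝ} (ha : 0 < a) (hr : 0 < r) :
    IntegrableOn (fun t : ℝ => t ^ (a-1) * Real.exp (-(r*t))) (Ioi (0:ℝ)) := by
  have := integrableOn_rpow_mul_exp_neg_mul_rpow (s := a-1) (p := 1) (b := r) (by linarith) zero_lt_one hr
  refine this.congr_fun (fun x hx => ?_) measurableSet_Ioi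
  simp only [Real.rpow_one, pow_one, neg_mul]

private lemma key_lintegral {s c : ℝ} (hs0 : 0 < s) (hs1 : s < 1) (hc : 0 < c) :
    ∫⁻ t in Ioi (0:ℝ), ENNReal.ofReal (t ^ (s-1) * (t+c)⁻¹)
      = ENNReal.ofReal (Real.Gamma s * Real.Gamma (1-s) * c ^ (s-1)) := by
  have meas : Measurable (fun q : ℝ × ℝ =>
      ENNReal.ofReal (q.1 ^ (s-1) * Real.exp (-((q.1+c) * q.2)))) := by
    apply Measurable.ennreal_ofReal
    fun_prop
  calc
    ∫⁻ t in Ioi (0:ℝ), ENNReal.ofReal (t ^ (s-1) * (t+c)⁻¹)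
        = ∫⁻ t in Ioi (0:ℝ), ∫⁻ x in Ioi (0:ℝ),
            ENNReal.ofReal (t ^ (s-1) * Real.exp (-((t+c) * x))) := by
      refine setLIntegral_congr_fun measurableSet_Ioi (fun t ht => ?_)
      rw [mem_Ioi] at ht
      have htc : 0 < t + c := by linarith
      rw [← ofReal_integral_eq_lintegral_ofReal
            ((exp_intble htc).const_mul _)
            (Filter.Eventually.of_forall fun x => by positivity)]
      rw [integral_const_mul, exp_int htc]
      ring_nf
    _ = ∫⁻ x in Ioi (0:ℝ), ∫⁻ t in Ioi (0:ℝ),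
            ENNReal.ofReal (t ^ (s-1) * Real.exp (-((t+c) * x))) := by
      exact lintegral_lintegral_swap (meas.aemeasurable)
    _ = ∫⁻ x in Ioi (0:ℝ),
          ENNReal.ofReal (Real.Gamma s * (x ^ ((1-s)-1) * Real.exp (-(c * x)))) := by
      refine setLIntegral_congr_fun measurableSet_Ioi (fun x hx => ?_)
      rw [mem_Ioi] at hx
      have hptw : ∀ t : ℝ, t ∈ Ioi (0:ℝ) → ENNReal.ofReal (t ^ (s-1) * Real.exp (-((t+c) * x)))
          = ENNReal.ofReal (Real.exp (-(c*x)) * (t ^ (s-1) * Real.exp (-(x * t)))) := by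
        intro t ht
        congr 1
        have h1 : -((t+c)*x) = -(c*x) + -(x*t) := by ring
        rw [h1, Real.exp_add]; ring
      rw [setLIntegral_congr_fun measurableSet_Ioi hptw]
      rw [← ofReal_integral_eq_lintegral_ofReal
            ((rpow_exp_intble hs0 hx).const_mul _)
            ((ae_restrict_iff' measurableSet_Ioi).mpr (Filter.Eventually.of_forall
              fun t (ht : t ∈ Ioi (0:ℝ)) => by
                have h0 : (0:ℝ) < t := ht; positivity))]
      rw [integral_const_mul, Real.integral_rpow_mul_exp_neg_mul_Ioi hs0 hx]
      congr 1
      rw [one_div, ← Real.rpow_neg_one x, ← Real.rpow_mul hx.le,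
        show (-1)*s = 1-s-1 by ring]
      ring
    _ = ENNReal.ofReal (Real.Gamma s * Real.Gamma (1-s) * c ^ (s-1)) := by
      rw [← ofReal_integral_eq_lintegral_ofReal
            ((rpow_exp_intble (by linarith : (0:ℝ) < 1-s) hc).const_mul _)
            ((ae_restrict_iff' measurableSet_Ioi).mpr (Filter.Eventually.of_forall
              fun x (hx : x ∈ Ioi (0:ℝ)) => by
                have h0 : (0:ℝ) < x := hx
                exact mul_nonneg (Real.Gamma_pos_of_pos hs0).le (by positivity)))]
      rw [integral_const_mul, Real.integral_rpow_mul_exp_neg_mul_Ioi (by linarith) hc]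
      congr 1
      rw [one_div, ← Real.rpow_neg_one c, ← Real.rpow_mul hc.le,
        show (-1)*(1-s) = s-1 by ring]
      ring

private lemma I_intble {s c : ℝ} (hs0 : 0 < s) (hs1 : s < 1) (hc : 0 < c) :
    IntegrableOn (fun t : ℝ => t ^ (s-1) * (t+c)⁻¹) (Ioi (0:ℝ)) := by
  constructor
  · apply Measurable.aestronglyMeasurable; fun_prop
  · rw [hasFiniteIntegral_iff_ofReal ((ae_restrict_iff' measurableSet_Ioi).mpr
      (Filter.Eventually.of_forall fun t (ht : t ∈ Ioi (0:ℝ)) => by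
        have h0 : (0:ℝ) < t := ht
        have h1 : (0:ℝ) < t + c := by linarith
        positivity))]
    rw [key_lintegral hs0 hs1 hc]
    exact ENNReal.ofReal_lt_top

private lemma I_eval {s c : ℝ} (hs0 : 0 < s) (hs1 : s < 1) (hc : 0 < c) :
    ∫ t in Ioi (0:ℝ), t ^ (s-1) * (t+c)⁻¹
      = Real.pi / Real.sin (Real.pi * s) * c ^ (s-1) := by
  rw [integral_eq_lintegral_of_nonneg_ae ((ae_restrict_iff' measurableSet_Ioi).mpr
      (Filter.Eventually.of_forall fun t (ht : t ∈ Ioi (0:ℝ)) => by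
        have h0 : (0:ℝ) < t := ht
        have h1 : (0:ℝ) < t + c := by linarith
        positivity))
      (by apply Measurable.aestronglyMeasurable; fun_prop)]
  rw [key_lintegral hs0 hs1 hc, ENNReal.toReal_ofReal
      (by have := Real.Gamma_pos_of_pos hs0
          have := Real.Gamma_pos_of_pos (by linarith : (0:ℝ) < 1 - s)
          positivity),
    Real.Gamma_mul_Gamma_one_sub]

private lemma ptwise_bound {s α β t : ℝ} (hs0 : 0 < s) (hα : 0 < α) (hβ : 0 < β) (ht : 0 < t) :
    t ^ s * ((t+α)⁻¹ * (t+β)⁻¹) ≤ t ^ (s-1) * (t+β)⁻¹ := by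
  have h1 : (0:ℝ) < t + α := by linarith
  have h2 : (0:ℝ) < t + β := by linarith
  have e : t ^ (s-1) = t ^ s * t⁻¹ := by
    rw [Real.rpow_sub ht, Real.rpow_one, div_eq_mul_inv]
  rw [e]
  have : (t+α)⁻¹ ≤ t⁻¹ := by
    apply inv_anti₀ ht; linarith
  calc t ^ s * ((t+α)⁻¹ * (t+β)⁻¹) ≤ t ^ s * (t⁻¹ * (t+β)⁻¹) := by
        apply mul_le_mul_of_nonneg_left _ (le_of_lt (Real.rpow_pos_of_pos ht s))
        apply mul_le_mul_of_nonneg_right this (le_of_lt (inv_pos.mpr h2))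
    _ = t ^ s * t⁻¹ * (t+β)⁻¹ := by ring

private lemma J_intble {s α β : ℝ} (hs0 : 0 < s) (hs1 : s < 1) (hα : 0 < α) (hβ : 0 < β) :
    IntegrableOn (fun t : ℝ => t ^ s * ((t+α)⁻¹ * (t+β)⁻¹)) (Ioi (0:ℝ)) := by
  apply Integrable.mono (I_intble hs0 hs1 hβ)
  · apply Measurable.aestronglyMeasurable; fun_prop
  · refine (ae_restrict_iff' measurableSet_Ioi).mpr
      (Filter.Eventually.of_forall fun t (ht : t ∈ Ioi (0:ℝ)) => ?_)
    have h0 : (0:ℝ) < t := ht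
    have h1 : (0:ℝ) < t + α := by linarith
    have h2 : (0:ℝ) < t + β := by linarith
    rw [Real.norm_eq_abs, Real.norm_eq_abs, abs_of_nonneg (by positivity),
      abs_of_nonneg (by positivity)]
    exact ptwise_bound hs0 hα hβ h0

private lemma J_eval_ne {s α β : ℝ} (hs0 : 0 < s) (hs1 : s < 1) (hα : 0 < α) (hβ : 0 < β)
    (hne : α ≠ β) :
    ∫ t in Ioi (0:ℝ), t ^ s * ((t+α)⁻¹ * (t+β)⁻¹)
      = Real.pi / Real.sin (Real.pi * s) * ((β ^ s - α ^ s) / (β - α)) := by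
  have hba : β - α ≠ 0 := sub_ne_zero.mpr (Ne.symm hne)
  have step : ∫ t in Ioi (0:ℝ), t ^ s * ((t+α)⁻¹ * (t+β)⁻¹)
      = ∫ t in Ioi (0:ℝ), (β - α)⁻¹ * (β * (t ^ (s-1) * (t+β)⁻¹) - α * (t ^ (s-1) * (t+α)⁻¹)) := by
    refine setIntegral_congr_fun measurableSet_Ioi (fun t ht => ?_)
    have h0 : (0:ℝ) < t := ht
    have h1 : (0:ℝ) < t + α := by linarith
    have h2 : (0:ℝ) < t + β := by linarith
    have e : t ^ s = t ^ (s-1) * t := by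
      rw [Real.rpow_sub h0, Real.rpow_one]; field_simp
    rw [e]
    field_simp
    ring
  rw [step, integral_const_mul,
    integral_sub ((I_intble hs0 hs1 hβ).const_mul β) ((I_intble hs0 hs1 hα).const_mul α),
    integral_const_mul, integral_const_mul, I_eval hs0 hs1 hβ, I_eval hs0 hs1 hα]
  have hβs : β ^ s = β * β ^ (s-1) := by
    rw [show s = 1+(s-1) by ring]
    rw [Real.rpow_add hβ, Real.rpow_one]
    ring_nf
  have hαs : α ^ s = α * α ^ (s-1) := by
    rw [show s = 1+(s-1) by ring]
    rw [Real.rpow_add hα, Real.rpow_one]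
    ring_nf
  have eβ : β * (π / Real.sin (π * s) * β ^ (s-1)) = π / Real.sin (π * s) * β ^ s := by
    rw [hβs]; ring
  have eα : α * (π / Real.sin (π * s) * α ^ (s-1)) = π / Real.sin (π * s) * α ^ s := by
    rw [hαs]; ring
  rw [eβ, eα, div_eq_mul_inv]
  ring

private lemma J_eval_eq {s α : ℝ} (hs0 : 0 < s) (hs1 : s < 1) (hα : 0 < α) :
    ∫ t in Ioi (0:ℝ), t ^ s * ((t+α)⁻¹ * (t+α)⁻¹)
      = Real.pi / Real.sin (Real.pi * s) * (s * α ^ (s-1)) := by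
  set K := Real.pi / Real.sin (Real.pi * s) with hK
  -- integration by parts on f t = t^s * (t+α)⁻¹
  have hderiv : ∀ t ∈ Ioi (0:ℝ), HasDerivAt (fun t : ℝ => t ^ s * (t+α)⁻¹)
      (s * (t ^ (s-1) * (t+α)⁻¹) - t ^ s * ((t+α)⁻¹ * (t+α)⁻¹)) t := by
    intro t ht
    have h0 : (0:ℝ) < t := ht
    have h1 : t + α ≠ 0 := by positivity
    have d1 : HasDerivAt (fun t : ℝ => t ^ s) (s * t ^ (s-1)) t :=
      Real.hasDerivAt_rpow_const (Or.inl h0.ne')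
    have d2 : HasDerivAt (fun t : ℝ => (t+α)⁻¹) (-1 / (t+α)^2) t := by
      have : HasDerivAt (fun t : ℝ => t + α) 1 t := (hasDerivAt_id t).add_const α
      exact this.inv h1
    have := d1.mul d2
    exact this.congr_deriv (by rw [div_eq_mul_inv, ← inv_pow]; ring)
  have hcont : ContinuousOn (fun t : ℝ => t ^ s * (t+α)⁻¹) (Ici (0:ℝ)) := by
    apply ContinuousOn.mul
    · exact fun t ht => (Real.continuousAt_rpow_const t s (Or.inr hs0.le)).continuousWithinAt
    · apply ContinuousOn.inv₀
      · exact (continuous_id.add continuous_const).continuousOn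
      · intro t ht
        have : (0:ℝ) ≤ t := ht
        positivity
  have htend : Filter.Tendsto (fun t : ℝ => t ^ s * (t+α)⁻¹) Filter.atTop (nhds 0) := by
    apply squeeze_zero' (g := fun t : ℝ => t ^ (s-1))
    · filter_upwards [Filter.eventually_gt_atTop 0] with t ht
      have h1 : (0:ℝ) < t + α := by linarith
      positivity
    · filter_upwards [Filter.eventually_gt_atTop 0] with t ht
      have h1 : (0:ℝ) < t + α := by linarith
      have e : t ^ (s-1) = t ^ s * t⁻¹ := by
        rw [Real.rpow_sub ht, Real.rpow_one, div_eq_mul_inv]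
      rw [e]
      exact mul_le_mul_of_nonneg_left (inv_anti₀ ht (by linarith))
        (le_of_lt (Real.rpow_pos_of_pos ht s))
    · have := tendsto_rpow_neg_atTop (by linarith : (0:ℝ) < 1 - s)
      refine this.congr' ?_
      filter_upwards [Filter.eventually_gt_atTop 0] with t ht
      rw [show -(1-s) = s-1 by ring]
  have hint : IntegrableOn (fun t : ℝ =>
      s * (t ^ (s-1) * (t+α)⁻¹) - t ^ s * ((t+α)⁻¹ * (t+α)⁻¹)) (Ioi (0:ℝ)) :=
    ((I_intble hs0 hs1 hα).const_mul s).sub (J_intble hs0 hs1 hα hα)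
  have ibp := MeasureTheory.integral_Ioi_of_hasDerivAt_of_tendsto
      (f := fun t : ℝ => t ^ s * (t+α)⁻¹) (hcont 0 Set.self_mem_Ici) hderiv hint htend
  simp only [Real.zero_rpow hs0.ne', zero_mul, sub_zero, zero_sub, neg_zero] at ibp
  rw [integral_sub ((I_intble hs0 hs1 hα).const_mul s) (J_intble hs0 hs1 hα hα),
    integral_const_mul, I_eval hs0 hs1 hα] at ibp
  linear_combination -ibp

section scalarmain
variable {p : ℕ} (hp : 2 ≤ p) {a b : ℝ} (ha : 0 < a) (hb : 0 < b)

private lemma scalar_main (hp : 2 ≤ p) (ha : 0 < a) (hb : 0 < b) :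
    Real.sin (Real.pi/p)/Real.pi *
      ∫ t in Ioi (0:ℝ), t ^ ((1:ℝ)/p) * ((t + a^p)⁻¹ * (t + b^p)⁻¹)
      = (∑ j ∈ Finset.range p, a^(p-1-j) * b^j)⁻¹ := by
  have hp0 : (0:ℝ) < p := by
    have : 0 < p := by omega
    exact_mod_cast this
  have hs0 : 0 < (1:ℝ)/p := by positivity
  have hs1 : (1:ℝ)/p < 1 := by
    rw [div_lt_one hp0]
    exact_mod_cast (by omega : 1 < p)
  have hα : (0:ℝ) < a^p := by positivity
  have hβ : (0:ℝ) < b^p := by positivity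
  have hsin : Real.sin (Real.pi * ((1:ℝ)/p)) ≠ 0 := by
    apply ne_of_gt
    apply Real.sin_pos_of_pos_of_lt_pi
    · positivity
    · rw [mul_one_div]
      exact div_lt_self Real.pi_pos (by exact_mod_cast (by omega : 1 < p))
  have hfactor : Real.sin (Real.pi/p)/Real.pi * (Real.pi / Real.sin (Real.pi * ((1:ℝ)/p))) = 1 := by
    rw [mul_one_div] at hsin ⊢
    field_simp
  have hroot : ∀ x : ℝ, 0 < x → ((x^p : ℝ)) ^ ((1:ℝ)/p) = x := by
    intro x hx
    rw [← Real.rpow_natCast x p, ← Real.rpow_mul hx.le, mul_one_div,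
      div_self (by positivity : (p:ℝ) ≠ 0), Real.rpow_one]
  rcases eq_or_ne a b with rfl | hab
  · rw [J_eval_eq hs0 hs1 hα, ← mul_assoc, hfactor, one_mul]
    have hsum : ∑ j ∈ Finset.range p, a^(p-1-j) * a^j = p * a^(p-1) := by
      rw [Finset.sum_congr rfl (fun j hj => ?_), Finset.sum_const, Finset.card_range,
        nsmul_eq_mul]
      rw [← pow_add]
      congr 1
      have := Finset.mem_range.mp hj
      omega
    rw [hsum]
    have : ((a^p : ℝ)) ^ ((1:ℝ)/p - 1) = (a^(p-1))⁻¹ := by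
      rw [← Real.rpow_natCast a p, ← Real.rpow_mul ha.le]
      rw [show (p:ℝ) * ((1:ℝ)/p - 1) = 1 - p by field_simp]
      rw [show (1:ℝ) - p = -((p:ℝ) - 1) by ring, Real.rpow_neg ha.le]
      congr 1
      rw [show ((p:ℝ) - 1) = ((p - 1 : ℕ) : ℝ) by push_cast [Nat.cast_sub (by omega : 1 ≤ p)]; ring]
      rw [Real.rpow_natCast]
    rw [this, mul_inv]
    congr 1
    rw [one_div]
  · have hne : (a^p : ℝ) ≠ b^p := by
      rcases lt_or_gt_of_ne hab with h | h
      · exact ne_of_lt (pow_lt_pow_left₀ h ha.le (by omega))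
      · exact ne_of_gt (pow_lt_pow_left₀ h hb.le (by omega))
    rw [J_eval_ne hs0 hs1 hα hβ hne, ← mul_assoc, hfactor, one_mul,
      hroot a ha, hroot b hb]
    have hsum : (∑ j ∈ Finset.range p, a^(p-1-j) * b^j) * (b - a) = b^p - a^p := by
      have := geom_sum₂_mul b a p
      rw [← this]
      congr 1
      rw [Finset.sum_congr rfl (fun j hj => ?_)]
      ring
    have hba : b - a ≠ 0 := sub_ne_zero.mpr (Ne.symm hab)
    have hsumpos : 0 < ∑ j ∈ Finset.range p, a^(p-1-j) * b^j := by
      apply Finset.sum_pos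
      · intro j hj; positivity
      · exact ⟨0, Finset.mem_range.mpr (by omega)⟩
    rw [← hsum]
    rw [div_eq_iff (by exact mul_ne_zero (ne_of_gt hsumpos) hba)]
    field_simp
end scalarmain


section helpers
variable {N : ℕ}

private lemma myconj_pow (U D : Matrix (Fin N) (Fin N) ℝ) (hU : U * star U = 1)
    (hU' : star U * U = 1) (k : ℕ) : (U * D * star U) ^ k = U * D ^ k * star U := by
  have cancel : ∀ X : Matrix (Fin N) (Fin N) ℝ, star U * (U * X) = X := fun X => by
    rw [← mul_assoc, hU', one_mul]
  induction k with
  | zero => simpa using hU.symm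
  | succ k ih =>
    rw [pow_succ, pow_succ, ih]
    simp only [mul_assoc]
    rw [cancel]

private lemma smul_one_add_diag (t : ℝ) (v : Fin N → ℝ) :
    t • (1 : Matrix (Fin N) (Fin N) ℝ) + diagonal v = diagonal (fun k => t + v k) := by
  rw [smul_one_eq_diagonal, ← diagonal_add]

private lemma conj_diag_inv (U : Matrix (Fin N) (Fin N) ℝ) (hU : U * star U = 1)
    (hU' : star U * U = 1) (w : Fin N → ℝ) (hw : ∀ k, w k ≠ 0) :
    (U * diagonal w * star U)⁻¹ = U * diagonal (fun k => (w k)⁻¹) * star U := by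
  apply inv_eq_right_inv
  have cancel : ∀ X : Matrix (Fin N) (Fin N) ℝ, star U * (U * X) = X := fun X => by
    rw [← mul_assoc, hU', one_mul]
  simp only [mul_assoc]
  rw [cancel, ← mul_assoc (diagonal w), diagonal_mul_diagonal]
  have : (fun k => w k * (w k)⁻¹) = fun _ : Fin N => (1:ℝ) := by
    funext k; exact mul_inv_cancel₀ (hw k)
  rw [this, diagonal_one, one_mul, hU]

private lemma entry3 {m' n' N1 N2 : ℕ} (U : Matrix (Fin m') (Fin N1) ℝ)
    (Q : Matrix (Fin N1) (Fin N2) ℝ) (V : Matrix (Fin N2) (Fin n') ℝ) (i : Fin m') (l : Fin n') :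
    (U * Q * V) i l = ∑ k, ∑ r, U i k * Q k r * V r l := by
  simp only [mul_apply, Finset.sum_mul]
  exact Finset.sum_comm

end helpers

section spectral
variable {N : ℕ} {A : Matrix (Fin N) (Fin N) ℝ}

/-- packaged spectral data -/
private lemma spectral_package (hA : A.PosDef) :
    ∃ (U : Matrix (Fin N) (Fin N) ℝ) (d : Fin N → ℝ),
      (∀ k, 0 < d k) ∧ U * star U = 1 ∧ star U * U = 1 ∧
      A = U * diagonal d * star U := by
  refine ⟨hA.1.eigenvectorUnitary, hA.1.eigenvalues, hA.eigenvalues_pos, ?_, ?_, ?_⟩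
  · exact (Matrix.mem_unitaryGroup_iff).mp (hA.1.eigenvectorUnitary).2
  · exact (Matrix.mem_unitaryGroup_iff').mp (hA.1.eigenvectorUnitary).2
  · have := hA.1.spectral_theorem
    simpa [RCLike.ofReal_real_eq_id] using this

end spectral

private lemma cancel_left {N q : ℕ} {U : Matrix (Fin N) (Fin N) ℝ} (h : star U * U = 1)
    (M : Matrix (Fin N) (Fin q) ℝ) : star U * (U * M) = M := by
  rw [← Matrix.mul_assoc, h, Matrix.one_mul]

private lemma cancel_left' {N q : ℕ} {U : Matrix (Fin N) (Fin N) ℝ} (h : U * star U = 1)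
    (M : Matrix (Fin N) (Fin q) ℝ) : U * (star U * M) = M := by
  rw [← Matrix.mul_assoc, h, Matrix.one_mul]

end auxiliary_lemmas

/-- For positive definite A, B and p ≥ 2, the solution X of
A^{p-1} X + A^{p-2} X B + ⋯ + X B^{p-1} = Y is given (entrywise) by
X = (sin(π/p)/π) ∫_0^∞ (t I + A^p)⁻¹ Y (t I + B^p)⁻¹ t^{1/p} dt. -/
theorem stmt11 {m n : ℕ} (p : ℕ) (hp : 2 ≤ p)
    (A : Matrix (Fin m) (Fin m) ℝ) (B : Matrix (Fin n) (Fin n) ℝ)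
    (hA : A.PosDef) (hB : B.PosDef) (Y : Matrix (Fin m) (Fin n) ℝ)
    (X : Matrix (Fin m) (Fin n) ℝ)
    (hX : ∑ j ∈ Finset.range p, A ^ (p - 1 - j) * X * B ^ j = Y) :
    ∀ (i : Fin m) (l : Fin n),
      X i l = Real.sin (Real.pi / p) / Real.pi *
        ∫ t in Set.Ioi (0 : ℝ),
          (((t • (1 : Matrix (Fin m) (Fin m) ℝ) + A ^ p)⁻¹ * Y *
              (t • (1 : Matrix (Fin n) (Fin n) ℝ) + B ^ p)⁻¹) i l) * t ^ ((1 : ℝ) / p) := by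
  intro i l
  obtain ⟨U, d, hd, hU, hU', hAspec⟩ := spectral_package hA
  obtain ⟨V, e, he, hV, hV', hBspec⟩ := spectral_package hB
  have hs0 : 0 < (1:ℝ)/p := by
    have : (0:ℝ) < p := by exact_mod_cast (by omega : 0 < p)
    positivity
  have hs1 : (1:ℝ)/p < 1 := by
    rw [div_lt_one (by exact_mod_cast (by omega : 0 < p))]
    exact_mod_cast (by omega : 1 < p)
  -- powers
  have hApow : ∀ k : ℕ, A ^ k = U * diagonal (fun i' => d i' ^ k) * star U := fun k => by
    rw [hAspec, myconj_pow U _ hU hU', diagonal_pow]; rfl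
  have hBpow : ∀ k : ℕ, B ^ k = V * diagonal (fun i' => e i' ^ k) * star V := fun k => by
    rw [hBspec, myconj_pow V _ hV hV', diagonal_pow]; rfl
  -- transformed matrices
  set W : Matrix (Fin m) (Fin n) ℝ := star U * Y * V with hWdef
  set Z : Matrix (Fin m) (Fin n) ℝ := star U * X * V with hZdef
  have hYW : Y = U * W * star V := by
    rw [hWdef]
    simp only [Matrix.mul_assoc]
    rw [hV, Matrix.mul_one, cancel_left' hU]
  have hXZ : X = U * Z * star V := by
    rw [hZdef]
    simp only [Matrix.mul_assoc]
    rw [hV, Matrix.mul_one, cancel_left' hU]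
  set S : Fin m → Fin n → ℝ := fun k r => ∑ j ∈ Finset.range p, d k ^ (p-1-j) * e r ^ j
    with hSdef
  have hSpos : ∀ k r, 0 < S k r := by
    intro k r
    apply Finset.sum_pos
    · intro j _; exact mul_pos (pow_pos (hd k) _) (pow_pos (he r) _)
    · exact ⟨0, Finset.mem_range.mpr (by omega)⟩
  -- relation between W and Z
  have hWZ : ∀ k r, W k r = Z k r * S k r := by
    intro k r
    have expand : W = ∑ j ∈ Finset.range p,
        diagonal (fun i' => d i' ^ (p-1-j)) * Z * diagonal (fun i' => e i' ^ j) := by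
      rw [hWdef, ← hX, Matrix.mul_sum, Matrix.sum_mul]
      refine Finset.sum_congr rfl fun j _ => ?_
      rw [hApow (p-1-j), hBpow j, hZdef]
      simp only [Matrix.mul_assoc]
      rw [hV', Matrix.mul_one, cancel_left hU']
    have : W k r = ∑ j ∈ Finset.range p, d k ^ (p-1-j) * Z k r * e r ^ j := by
      rw [expand, Matrix.sum_apply]
      refine Finset.sum_congr rfl fun j _ => ?_
      rw [Matrix.mul_diagonal, Matrix.diagonal_mul]
    rw [this]
    simp only [hSdef, Finset.mul_sum]
    exact Finset.sum_congr rfl fun j _ => by ring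
  -- inverses
  have hInvA : ∀ t ∈ Ioi (0:ℝ), (t • (1 : Matrix (Fin m) (Fin m) ℝ) + A ^ p)⁻¹
      = U * diagonal (fun k => (t + d k ^ p)⁻¹) * star U := by
    intro t ht
    have ht0 : (0:ℝ) < t := ht
    have key : t • (1 : Matrix (Fin m) (Fin m) ℝ) + A ^ p
        = U * diagonal (fun k => t + d k ^ p) * star U := by
      rw [hApow p, ← smul_one_add_diag]
      have h1 : t • (1 : Matrix (Fin m) (Fin m) ℝ) = U * (t • (1 : Matrix (Fin m) (Fin m) ℝ)) * star U := by
        rw [Matrix.mul_smul, Matrix.smul_mul, Matrix.mul_one, hU]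
      rw [Matrix.mul_add, Matrix.add_mul, ← h1]
    rw [key, conj_diag_inv U hU hU' _ (fun k => by have := hd k; positivity)]
  have hInvB : ∀ t ∈ Ioi (0:ℝ), (t • (1 : Matrix (Fin n) (Fin n) ℝ) + B ^ p)⁻¹
      = V * diagonal (fun k => (t + e k ^ p)⁻¹) * star V := by
    intro t ht
    have ht0 : (0:ℝ) < t := ht
    have key : t • (1 : Matrix (Fin n) (Fin n) ℝ) + B ^ p
        = V * diagonal (fun k => t + e k ^ p) * star V := by
      rw [hBpow p, ← smul_one_add_diag]
      have h1 : t • (1 : Matrix (Fin n) (Fin n) ℝ) = V * (t • (1 : Matrix (Fin n) (Fin n) ℝ)) * star V := by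
        rw [Matrix.mul_smul, Matrix.smul_mul, Matrix.mul_one, hV]
      rw [Matrix.mul_add, Matrix.add_mul, ← h1]
    rw [key, conj_diag_inv V hV hV' _ (fun k => by have := he k; positivity)]
  -- pointwise rewriting of the integrand
  have hptw : ∀ t ∈ Ioi (0:ℝ),
      (((t • (1 : Matrix (Fin m) (Fin m) ℝ) + A ^ p)⁻¹ * Y *
          (t • (1 : Matrix (Fin n) (Fin n) ℝ) + B ^ p)⁻¹) i l) * t ^ ((1 : ℝ) / p)
      = ∑ k, ∑ r, (U i k * star V r l * W k r) *
          (t ^ ((1:ℝ)/p) * ((t + d k ^ p)⁻¹ * (t + e r ^ p)⁻¹)) := by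
    intro t ht
    rw [hInvA t ht, hInvB t ht]
    conv_lhs => rw [hYW]
    have hmat : (U * diagonal (fun k => (t + d k ^ p)⁻¹) * star U) * (U * W * star V) *
        (V * diagonal (fun k => (t + e k ^ p)⁻¹) * star V)
        = U * (diagonal (fun k => (t + d k ^ p)⁻¹) * W * diagonal (fun k => (t + e k ^ p)⁻¹))
            * star V := by
      simp only [Matrix.mul_assoc]
      rw [cancel_left hU', cancel_left hV']
    rw [hmat, entry3, Finset.sum_mul]
    refine Finset.sum_congr rfl fun k _ => ?_
    rw [Finset.sum_mul]
    refine Finset.sum_congr rfl fun r _ => ?_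
    rw [Matrix.mul_diagonal, Matrix.diagonal_mul]
    ring
  -- rewrite the integral
  rw [setIntegral_congr_fun measurableSet_Ioi hptw]
  have hintegrable : ∀ (k : Fin m) (r : Fin n), IntegrableOn
      (fun t : ℝ => (U i k * star V r l * W k r) *
        (t ^ ((1:ℝ)/p) * ((t + d k ^ p)⁻¹ * (t + e r ^ p)⁻¹))) (Ioi (0:ℝ)) := by
    intro k r
    exact (J_intble hs0 hs1 (by have := hd k; positivity) (by have := he r; positivity)).const_mul _
  rw [integral_finset_sum _ (fun k _ => integrable_finset_sum _ (fun r _ => hintegrable k r))]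
  rw [Finset.mul_sum]
  have : ∀ k : Fin m, Real.sin (Real.pi / p) / Real.pi *
        ∫ t in Ioi (0:ℝ), ∑ r, (U i k * star V r l * W k r) *
          (t ^ ((1:ℝ)/p) * ((t + d k ^ p)⁻¹ * (t + e r ^ p)⁻¹))
      = ∑ r, U i k * Z k r * star V r l := by
    intro k
    rw [integral_finset_sum _ (fun r _ => hintegrable k r), Finset.mul_sum]
    refine Finset.sum_congr rfl fun r _ => ?_
    rw [integral_const_mul]
    have := scalar_main hp (hd k) (he r)
    calc Real.sin (Real.pi / p) / Real.pi * ((U i k * star V r l * W k r) *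
            ∫ t in Ioi (0:ℝ), t ^ ((1:ℝ)/p) * ((t + d k ^ p)⁻¹ * (t + e r ^ p)⁻¹))
        = (U i k * star V r l * W k r) * (Real.sin (Real.pi / p) / Real.pi *
            ∫ t in Ioi (0:ℝ), t ^ ((1:ℝ)/p) * ((t + d k ^ p)⁻¹ * (t + e r ^ p)⁻¹)) := by ring
      _ = (U i k * star V r l * W k r) * (S k r)⁻¹ := by rw [this]
      _ = U i k * Z k r * star V r l := by
          have hS0 : S k r ≠ 0 := (hSpos k r).ne'
          rw [hWZ k r]
          field_simp [hS0]
  calc X i l = (U * Z * star V) i l := by rw [← hXZ]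
    _ = ∑ k, ∑ r, U i k * Z k r * star V r l := entry3 U Z (star V) i l
    _ = _ := Finset.sum_congr rfl fun k _ => (this k).symm
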